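/- arXiv:1806.05342 — 3 statements merged into one kernel-verified Lean document; each statement's English description precedes it below -/
import Mathlib

section
/- If A, B, C are full subcategories of a triangulated category D, then the star operation is associative: (A ∗ B) ∗ C = A ∗ (B ∗ C), where A ∗ B is the full subcategory of objects x admitting a distinguished triangle a → x → b → a[1] with a ∈ A and b ∈ B. -/
open CategoryTheory CategoryTheory.Limits CategoryTheory.Pretriangulated
  CategoryTheory.Triangulated

universe v u

namespace GluePaper

variable {C : Type u} [Category.{v} C] [Preadditive C] [HasZeroObject C]
  [HasShift C ℤ] [∀ (n : ℤ), (shiftFunctor C n).Additive] [Pretriangulated C]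

/-- `star A B` is the full subcategory `A ∗ B` of objects `x` admitting a distinguished
triangle `a → x → b → a⟦1⟧` with `a ∈ A` and `b ∈ B`. -/
def star (A B : Set C) : Set C :=
  {x | ∃ (a b : C) (f : a ⟶ x) (g : x ⟶ b) (h : b ⟶ a⟦(1 : ℤ)⟧),
    Triangle.mk f g h ∈ (distTriang C) ∧ a ∈ A ∧ b ∈ B}

/-- There exists a distinguished triangle `E → X → D' → E⟦1⟧`. -/
def triExists (E X D' : C) : Prop :=
  ∃ (f : E ⟶ X) (g : X ⟶ D') (h : D' ⟶ E⟦(1 : ℤ)⟧),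
    Triangle.mk f g h ∈ distTriang C

/-- `smd S` consists of all direct summands of objects of `S`. -/
def smd (S : Set C) : Set C :=
  {X | ∃ (Y : C) (_ : Y ∈ S) (ι : X ⟶ Y) (π : Y ⟶ X), ι ≫ π = 𝟙 X}

/-- `addClosure S₀ = Add(S₀)`: all coproducts of objects of `S₀` (up to isomorphism). -/
def addClosure (S₀ : Set C) : Set C :=
  {X | ∃ (J : Type v) (f : J → C) (c : Cofan f), Nonempty (IsColimit c) ∧
    (∀ j, f j ∈ S₀) ∧ Nonempty (X ≅ c.pt)}

/-- `S` is closed under (small) coproducts. -/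
def coprodClosed (S : Set C) : Prop :=
  ∀ (J : Type v) (f : J → C) (c : Cofan f), Nonempty (IsColimit c) →
    (∀ j, f j ∈ S) → c.pt ∈ S

/-- `Coprod(S₀)`: the smallest full subcategory containing `S₀`, closed under coproducts
and under extensions. -/
def coprodClosure (S₀ : Set C) : Set C :=
  ⋂₀ {S : Set C | S₀ ⊆ S ∧ coprodClosed S ∧ star S S ⊆ S}

/-- The smallest full subcategory containing `S₀`, closed under coproducts, extensions and
direct summands. -/
def coprodSmdClosure (S₀ : Set C) : Set C :=
  ⋂₀ {S : Set C | S₀ ⊆ S ∧ coprodClosed S ∧ star S S ⊆ S ∧ smd S ⊆ S}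

/-- `G[A,B]`: the objects `Σ^{-i} G = G⟦-i⟧` for `A ≤ i ≤ B`. -/
def shiftSet (G : C) (A B : ℤ) : Set C :=
  {X | ∃ i : ℤ, A ≤ i ∧ i ≤ B ∧ Nonempty (X ≅ G⟦-i⟧)}

/-- `G(-∞,B]`: the objects `Σ^{-i} G = G⟦-i⟧` for `i ≤ B`. -/
def shiftSetLE (G : C) (B : ℤ) : Set C :=
  {X | ∃ i : ℤ, i ≤ B ∧ Nonempty (X ≅ G⟦-i⟧)}

/-- `Coprod_n(S₀)`, defined inductively: `Coprod_1(S₀) = Add(S₀)` and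
`Coprod_{n+1}(S₀) = Add(S₀) ∗ Coprod_n(S₀)`.  (With the convention that
`Coprod_0(S₀)` consists of the zero objects.) -/
def coprodN (S₀ : Set C) : ℕ → Set C
  | 0 => {X | IsZero X}
  | n + 1 => star (addClosure S₀) (coprodN S₀ n)

/-- `⟨G⟩_n^{[A,B]} = smd(Coprod_n(G[A,B]))`. -/
def shovel (G : C) (n : ℕ) (A B : ℤ) : Set C := smd (coprodN (shiftSet G A B) n)

/-- `⟨G⟩^{[A,B]} = smd(Coprod(G[A,B]))`. -/
def shovelInf (G : C) (A B : ℤ) : Set C := coprodSmdClosure (shiftSet G A B)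

/-- The aisle `D_G^{≤0} = Coprod(G(-∞,0])` of the t-structure generated by `G`. -/
def genAisle (G : C) : Set C := coprodClosure (shiftSetLE G 0)

/-- An object `X` is compact if `Hom(X,-)` commutes with coproducts. -/
def IsCompactObj (X : C) : Prop :=
  ∀ J : Type v, Nonempty (PreservesColimitsOfShape (Discrete J)
    (preadditiveCoyoneda.obj (Opposite.op X)))

/-- `G` is a compact generator. -/
def IsCompactGenerator (G : C) : Prop :=
  IsCompactObj G ∧ ∀ X : C, (∀ (n : ℤ) (f : G⟦n⟧ ⟶ X), f = 0) → IsZero X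

/-- `Hom(Σ^{-n}G, H) = 0` for all `n ≫ 0`. -/
def homVanishEventually (G H : C) : Prop :=
  ∃ N : ℤ, ∀ n ≥ N, ∀ f : G⟦-n⟧ ⟶ H, f = 0

/-- Two t-structures are equivalent if there is `A > 0` with
`D₁^{≤ -A} ⊆ D₂^{≤ 0} ⊆ D₁^{≤ A}`. -/
def tEquiv (t₁ t₂ : TStructure C) : Prop :=
  ∃ A : ℤ, 0 < A ∧ (∀ X : C, t₁.le (-A) X → t₂.le 0 X) ∧
    (∀ X : C, t₂.le 0 X → t₁.le A X)

/-- The t-structure `t` lies in the preferred equivalence class: it is equivalent to the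
t-structure generated by the compact generator `G`, whose aisle is `Coprod(G(-∞,0])`
(recall `X ∈ D_G^{≤ n}` iff `X⟦n⟧ ∈ Coprod(G(-∞,0])`). -/
def inPreferred (G : C) (t : TStructure C) : Prop :=
  ∃ A : ℤ, 0 < A ∧ (∀ X : C, X⟦(-A : ℤ)⟧ ∈ genAisle G → t.le 0 X) ∧
    (∀ X : C, t.le 0 X → X⟦(A : ℤ)⟧ ∈ genAisle G)

/-- `t` lies in the preferred equivalence class of t-structures (for some, equivalently any,
compact generator). -/
def inPreferredClass (t : TStructure C) : Prop :=
  ∃ G : C, IsCompactGenerator G ∧ inPreferred G t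

/-- Weak approximability of a triangulated category with coproducts. -/
def IsWeaklyApproximable : Prop :=
  ∃ (G : C) (t : TStructure C) (A : ℕ), 0 < A ∧ IsCompactGenerator G ∧
    t.le 0 (G⟦(A : ℤ)⟧) ∧
    (∀ X : C, t.le 0 X → ∀ f : G⟦(-A : ℤ)⟧ ⟶ X, f = 0) ∧
    (∀ X : C, t.le 0 X → ∃ E D' : C,
      E ∈ shovelInf G (-(A : ℤ)) (A : ℤ) ∧ t.le (-1) D' ∧ triExists E X D')

/-- Approximability of a triangulated category with coproducts. -/
def IsApproximable : Prop :=
  ∃ (G : C) (t : TStructure C) (A : ℕ), 0 < A ∧ IsCompactGenerator G ∧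
    t.le 0 (G⟦(A : ℤ)⟧) ∧
    (∀ X : C, t.le 0 X → ∀ f : G⟦(-A : ℤ)⟧ ⟶ X, f = 0) ∧
    (∀ X : C, t.le 0 X → ∃ E D' : C,
      E ∈ shovel G A (-(A : ℤ)) (A : ℤ) ∧ t.le (-1) D' ∧ triExists E X D')

/-- `D^- = ⋃ D^{≤ m}`. -/
def Dminus (t : TStructure C) : Set C := {X | ∃ m : ℤ, t.le m X}

/-- `D^+ = ⋃ D^{≥ -m}`. -/
def Dplus (t : TStructure C) : Set C := {X | ∃ m : ℤ, t.ge m X}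

/-- `D^-_c`: objects `X` such that for every `m > 0` there is a distinguished triangle
`E → X → E'` with `E` compact and `E' ∈ D^{≤ -m}`. -/
def DminusC (t : TStructure C) : Set C :=
  {X | ∀ m : ℤ, 0 < m → ∃ E E' : C, IsCompactObj E ∧ t.le (-m) E' ∧ triExists E X E'}

/-- `D^b_c = D^-_c ∩ D^b`. -/
def DbC (t : TStructure C) : Set C := DminusC t ∩ (Dminus t ∩ Dplus t)

/-- A set of objects is a thick triangulated subcategory. -/
def IsThickTriangulated (S : Set C) : Prop :=
  (∀ X : C, IsZero X → X ∈ S) ∧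
  (∀ X ∈ S, ∀ n : ℤ, X⟦n⟧ ∈ S) ∧
  (∀ T ∈ distTriang C, T.obj₁ ∈ S → T.obj₂ ∈ S → T.obj₃ ∈ S) ∧
  smd S ⊆ S


lemma dist_of_iso₁₃ {a' b' : C} (T : Triangle C) (hT : T ∈ distTriang C)
    (eA : a' ≅ T.obj₁) (eB : b' ≅ T.obj₃) :
    Triangle.mk (eA.hom ≫ T.mor₁) (T.mor₂ ≫ eB.inv)
      (eB.hom ≫ T.mor₃ ≫ (eA.inv)⟦(1:ℤ)⟧') ∈ distTriang C := by
  refine isomorphic_distinguished _ hT _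
    (Triangle.isoMk _ _ eA (Iso.refl _) eB ?_ ?_ ?_)
  · exact Category.comp_id _
  · exact (Category.assoc _ _ _).trans ((congrArg _ eB.inv_hom_id).trans
      ((Category.comp_id _).trans (Category.id_comp _).symm))
  · exact (Category.assoc _ _ _).trans (congrArg _ ((Category.assoc _ _ _).trans
      (congrArg _ ((CategoryTheory.Functor.map_comp _ _ _).symm.trans
        ((congrArg _ eA.inv_hom_id).trans (CategoryTheory.Functor.map_id _ _))) |>.trans
          (Category.comp_id _))))

/-- the star operation on full subcategories of a triangulated category
is associative. -/
theorem star_assoc [IsTriangulated C] (A B E : Set C) :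
    star (star A B) E = star A (star B E) := by
  ext x
  constructor
  · rintro ⟨y, e, f, g, h, hT, ⟨a, b, f', g', h', hT', ha, hb⟩, he⟩
    obtain ⟨z, v, w, hz⟩ := distinguished_cocone_triangle (f' ≫ f)
    have O := someOctahedron rfl hT' hT hz
    exact ⟨a, z, f' ≫ f, v, w, hz, ha, b, e, O.m₁, O.m₃, _, O.mem, hb, he⟩
  · rintro ⟨a, w, f, g, h, hT, ha, b, e, f', g', h', hT', hb, he⟩
    obtain ⟨z, v, w', hz⟩ := distinguished_cocone_triangle (g ≫ g')
    have O := someOctahedron rfl (rot_of_distTriang _ hT) (rot_of_distTriang _ hT') hz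
    have hinv := inv_rot_of_distTriang _ hz
    refine ⟨z⟦(-1:ℤ)⟧, e, _, g ≫ g', _, hinv, ?_, he⟩
    have hsh := Triangle.shift_distinguished _ O.mem (-1)
    exact ⟨a, b, _, _, _,
      dist_of_iso₁₃ _ hsh ((shiftFunctorCompIsoId C (1:ℤ) (-1) (by omega)).app a).symm
        ((shiftFunctorCompIsoId C (1:ℤ) (-1) (by omega)).app b).symm, ha, hb⟩


end GluePaper
end

section
/- Let D be a triangulated category with coproducts and G an object of D. Then the subcategory Coprod(G(-∞, 0]) — the smallest full subcategory S of D closed under coproducts, with S ∗ S ⊆ S, and containing all Σ^{-i}G for i ≤ 0 — is closed under direct summands. Consequently smd(Coprod(G(-∞,0])) = Coprod(G(-∞,0]). -/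
open CategoryTheory CategoryTheory.Limits CategoryTheory.Pretriangulated
  CategoryTheory.Triangulated

universe v u

namespace GluePaper

variable {C : Type u} [Category.{v} C] [Preadditive C] [HasZeroObject C]
  [HasShift C ℤ] [∀ (n : ℤ), (shiftFunctor C n).Additive] [Pretriangulated C]

-- basic closure properties of coprodClosure
lemma coprodClosure_subset (S₀ : Set C) : S₀ ⊆ coprodClosure S₀ :=
  fun _ hx => Set.mem_sInter.2 fun _ hS => hS.1 hx

lemma coprodClosure_coprodClosed (S₀ : Set C) : coprodClosed (coprodClosure S₀) :=
  fun J f c hc hf => Set.mem_sInter.2 fun S hS =>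
    hS.2.1 J f c hc (fun j => Set.mem_sInter.1 (hf j) S hS)

lemma coprodClosure_star (S₀ : Set C) :
    star (coprodClosure S₀) (coprodClosure S₀) ⊆ coprodClosure S₀ := by
  rintro x ⟨a, b, f, g, h, hT, ha, hb⟩
  exact Set.mem_sInter.2 fun S hS =>
    hS.2.2 ⟨a, b, f, g, h, hT, Set.mem_sInter.1 ha S hS, Set.mem_sInter.1 hb S hS⟩

lemma coprodClosure_iso_mem [HasCoproducts.{v} C] (S₀ : Set C) {X Y : C} (e : X ≅ Y)
    (hY : Y ∈ coprodClosure S₀) : X ∈ coprodClosure S₀ := by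
  have hc : IsColimit (Cofan.mk (f := fun _ : PUnit.{v+1} => Y) X (fun _ => e.inv)) := by
    refine mkCofanColimit _ (fun t => e.hom ≫ t.inj ⟨⟩) (fun t j => by simp) ?_
    intro t m hm
    rw [← hm ⟨⟩]
    simp
  exact coprodClosure_coprodClosed S₀ PUnit.{v+1} (fun _ => Y) _ ⟨hc⟩ (fun _ => hY)

lemma coprodClosure_shift_mem [HasCoproducts.{v} C] (G : C) {X : C}
    (hX : X ∈ coprodClosure (shiftSetLE G 0)) :
    X⟦(1:ℤ)⟧ ∈ coprodClosure (shiftSetLE G 0) := by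
  set T := coprodClosure (shiftSetLE G 0) with hT
  set U : Set C := {Z | Z⟦(1:ℤ)⟧ ∈ T} with hU
  have hU₀ : shiftSetLE G 0 ⊆ U := by
    rintro Z ⟨i, hi, ⟨iso⟩⟩
    refine coprodClosure_subset _ ⟨i - 1, by omega, ⟨?_⟩⟩
    exact (shiftFunctor C (1:ℤ)).mapIso iso ≪≫
      ((shiftFunctorAdd' C (-i) 1 (-(i-1)) (by ring)).app G).symm
  have hUc : coprodClosed U := by
    intro J f c hc hf
    have h1 : (∐ fun j => (f j)⟦(1:ℤ)⟧) ∈ T :=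
      coprodClosure_coprodClosed _ J (fun j => (f j)⟦(1:ℤ)⟧) _
        ⟨coproductIsCoproduct _⟩ (fun j => hf j)
    refine coprodClosure_iso_mem _ ?_ h1
    exact (shiftFunctor C (1:ℤ)).mapIso
        (hc.some.coconePointUniqueUpToIso (coproductIsCoproduct f)) ≪≫
      preservesColimitIso (shiftFunctor C (1:ℤ)) (Discrete.functor f) ≪≫
      HasColimit.isoOfNatIso (Discrete.natIso fun j => Iso.refl ((f j.as)⟦(1:ℤ)⟧))
  have hUs : star U U ⊆ U := by
    rintro x ⟨a, b, f, g, h, hdT, ha, hb⟩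
    refine coprodClosure_star _ ⟨a⟦(1:ℤ)⟧, b⟦(1:ℤ)⟧, -(f⟦(1:ℤ)⟧'), -(g⟦(1:ℤ)⟧'),
      -(h⟦(1:ℤ)⟧'), ?_, ha, hb⟩
    exact rot_of_distTriang _ (rot_of_distTriang _ (rot_of_distTriang _ hdT))
  exact Set.mem_sInter.1 hX U ⟨hU₀, hUc, hUs⟩


lemma exists_retract_triangle [HasCoproducts.{v} C] {X Y : C}
    (ι : X ⟶ Y) (π : Y ⟶ X) (hs : ι ≫ π = 𝟙 X) :
    ∃ (ψ : (∐ fun _ : ULift.{v} ℕ => Y) ⟶ X)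
      (g : X ⟶ (∐ fun _ : ULift.{v} ℕ => Y)⟦(1:ℤ)⟧)
      (h : (∐ fun _ : ULift.{v} ℕ => Y)⟦(1:ℤ)⟧ ⟶ (∐ fun _ : ULift.{v} ℕ => Y)⟦(1:ℤ)⟧),
      Triangle.mk ψ g h ∈ distTriang C := by
  set f : ULift.{v} ℕ → C := fun _ => Y with hf
  set e : Y ⟶ Y := π ≫ ι with he
  have hee : e ≫ e = e := by
    rw [he, Category.assoc, ← Category.assoc ι, hs, Category.id_comp]
  set φ : (∐ f) ⟶ (∐ f) :=
    Sigma.desc (fun n => Sigma.ι f n - e ≫ Sigma.ι f ⟨n.down + 1⟩) with hφ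
  set ψ : (∐ f) ⟶ X := Sigma.desc (fun _ => π) with hψ
  set ρ : X ⟶ (∐ f) := ι ≫ Sigma.ι f ⟨0⟩ with hρ
  set σ : (∐ f) ⟶ (∐ f) :=
    Sigma.desc (fun n => (𝟙 Y - e) ≫ Sigma.ι f n -
      ∑ k ∈ Finset.range n.down, e ≫ Sigma.ι f ⟨k⟩) with hσ
  have hιφ : ∀ n : ULift.{v} ℕ,
      Sigma.ι f n ≫ φ = Sigma.ι f n - e ≫ Sigma.ι f ⟨n.down + 1⟩ := by
    intro n; rw [hφ, colimit.ι_desc]; rfl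
  have hιψ : ∀ n : ULift.{v} ℕ, Sigma.ι f n ≫ ψ = π := by
    intro n; rw [hψ, colimit.ι_desc]; rfl
  have hισ : ∀ n : ULift.{v} ℕ, Sigma.ι f n ≫ σ = (𝟙 Y - e) ≫ Sigma.ι f n -
      ∑ k ∈ Finset.range n.down, e ≫ Sigma.ι f ⟨k⟩ := by
    intro n; rw [hσ, colimit.ι_desc]; rfl
  -- the bicone equations
  have eqA : φ ≫ ψ = 0 := by
    apply Sigma.hom_ext; intro n
    rw [← Category.assoc, hιφ, Preadditive.sub_comp, Category.assoc, hιψ, hιψ, he,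
      Category.assoc, hs, Category.comp_id, sub_self, Limits.comp_zero]
  have eqB : ρ ≫ ψ = 𝟙 X := by
    rw [hρ, Category.assoc, hιψ, hs]
  have eqC : φ ≫ σ = 𝟙 (∐ f) := by
    apply Sigma.hom_ext; intro n
    rw [← Category.assoc, hιφ, Preadditive.sub_comp, Category.assoc, hισ, hισ,
      Category.comp_id]
    rw [Preadditive.comp_sub, ← Category.assoc e (𝟙 Y - e), Preadditive.comp_sub,
      Category.comp_id, hee, sub_self, Limits.zero_comp]
    rw [Preadditive.comp_sum]
    simp only [← Category.assoc, hee]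
    rw [Finset.sum_range_succ, Preadditive.sub_comp, Category.id_comp]
    abel
  have hs' := reassoc_of% hs
  have eqD : ρ ≫ σ = 0 := by
    rw [hρ, Category.assoc, hισ]
    simp only [Finset.range_zero, Finset.sum_empty, sub_zero, Preadditive.comp_sub,
      Preadditive.sub_comp, Category.id_comp, he]
    rw [← Category.assoc ι (π ≫ ι), ← Category.assoc ι π, hs, Category.id_comp, sub_self]
  have hee' := reassoc_of% hee
  have eqE : σ ≫ φ + ψ ≫ ρ = 𝟙 (∐ f) := by
    apply Sigma.hom_ext; intro n
    have hsum : ∀ k : ℕ, (e ≫ Sigma.ι f ⟨k⟩) ≫ φ =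
        e ≫ Sigma.ι f ⟨k⟩ - e ≫ Sigma.ι f ⟨k + 1⟩ := by
      intro k
      rw [Category.assoc, hιφ, Preadditive.comp_sub, hee']
    rw [Preadditive.comp_add, ← Category.assoc, hισ, Preadditive.sub_comp,
      Preadditive.sum_comp, Finset.sum_congr rfl (fun k _ => hsum k),
      Finset.sum_range_sub' (fun k => e ≫ Sigma.ι f ⟨k⟩),
      Category.assoc, hιφ, Preadditive.sub_comp, Category.id_comp,
      Preadditive.comp_sub, hee',
      ← Category.assoc, hιψ, hρ, ← Category.assoc π ι, ← he, Category.comp_id]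
    abel
  -- binary biproduct structure on ∐ f
  let b : BinaryBicone (∐ f) X :=
    { pt := ∐ f
      fst := σ
      snd := ψ
      inl := φ
      inr := ρ
      inl_fst := eqC
      inl_snd := eqA
      inr_fst := eqD
      inr_snd := eqB }
  have hb : b.IsBilimit := isBinaryBilimitOfTotal b eqE
  haveI : HasBinaryBiproduct (∐ f) X := HasBinaryBiproduct.mk ⟨b, hb⟩
  -- the triangle ∐f → ∐f → X → 0 is distinguished
  have hlift : φ ≫ biprod.lift σ ψ = biprod.inl := by
    apply biprod.hom_ext
    · rw [Category.assoc, biprod.lift_fst, eqC, biprod.inl_fst]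
    · rw [Category.assoc, biprod.lift_snd, eqA, biprod.inl_snd]
  have hlift' : ρ ≫ biprod.lift σ ψ = biprod.inr := by
    apply biprod.hom_ext
    · rw [Category.assoc, biprod.lift_fst, eqD, biprod.inr_fst]
    · rw [Category.assoc, biprod.lift_snd, eqB, biprod.inr_snd]
  have hdist : Triangle.mk φ ψ (0 : X ⟶ (∐ f)⟦(1:ℤ)⟧) ∈ distTriang C := by
    refine isomorphic_distinguished _ (binaryBiproductTriangle_distinguished (∐ f) X) _ ?_
    refine Triangle.isoMk _ _ (Iso.refl _) ⟨biprod.lift σ ψ, biprod.desc φ ρ, ?_, ?_⟩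
      (Iso.refl _) ?_ ?_ ?_
    · exact biprod.lift_desc.trans eqE
    · apply biprod.hom_ext'
      · exact (biprod.inl_desc_assoc φ ρ (biprod.lift σ ψ)).trans (hlift.trans (Category.comp_id _).symm)
      · exact (biprod.inr_desc_assoc φ ρ (biprod.lift σ ψ)).trans (hlift'.trans (Category.comp_id _).symm)
    · exact hlift.trans (Category.id_comp _).symm
    · exact (Category.comp_id _).trans (biprod.lift_snd σ ψ).symm
    · exact Limits.zero_comp.trans Limits.comp_zero.symm
  exact ⟨ψ, 0, -(φ⟦(1:ℤ)⟧'), rot_of_distTriang _ hdist⟩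


/-- `Coprod(G(-∞,0])` is closed under direct summands, hence
`smd(Coprod(G(-∞,0])) = Coprod(G(-∞,0])`. -/
theorem coprodClosure_smd_closed [HasCoproducts.{v} C] (G : C) :
    smd (coprodClosure (shiftSetLE G 0)) ⊆ coprodClosure (shiftSetLE G 0) ∧
    smd (coprodClosure (shiftSetLE G 0)) = coprodClosure (shiftSetLE G 0) := by
  have key : smd (coprodClosure (shiftSetLE G 0)) ⊆ coprodClosure (shiftSetLE G 0) := by
    rintro X ⟨Y, hY, ι, π, hsplit⟩
    obtain ⟨ψ, g, h, hdist⟩ := exists_retract_triangle ι π hsplit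
    have hQ : (∐ fun _ : ULift.{v} ℕ => Y) ∈ coprodClosure (shiftSetLE G 0) :=
      coprodClosure_coprodClosed _ (ULift.{v} ℕ) _
        (Cofan.mk _ (Sigma.ι (fun _ : ULift.{v} ℕ => Y)))
        ⟨coproductIsCoproduct _⟩ (fun _ => hY)
    have hQ1 := coprodClosure_shift_mem G hQ
    exact coprodClosure_star _ ⟨_, _, ψ, g, h, hdist, hQ, hQ1⟩
  refine ⟨key, Set.Subset.antisymm key (fun X hX => ⟨X, hX, 𝟙 X, 𝟙 X, by simp⟩)⟩


end GluePaper
end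

section
/- Let D be a triangulated category with coproducts and a compact generator G satisfying Hom_D(Σ^{-n}G, G) = 0 for all n ≫ 0. Then every t-structure in the preferred equivalence class (the class of the t-structure generated by G) is non-degenerate: the intersection of all D^{≤n} is zero and the intersection of all D^{≥n} is zero. -/
open CategoryTheory CategoryTheory.Limits CategoryTheory.Pretriangulated
  CategoryTheory.Triangulated

universe v u

namespace GluePaper

variable {C : Type u} [Category.{v} C] [Preadditive C] [HasZeroObject C]
  [HasShift C ℤ] [∀ (n : ℤ), (shiftFunctor C n).Additive] [Pretriangulated C]

lemma zero_of_iso {X X' Y Y' : C} (e₁ : X' ≅ X) (e₂ : Y ≅ Y')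
    (h : ∀ f : X ⟶ Y, f = 0) (f : X' ⟶ Y') : f = 0 := by
  have h0 : e₁.inv ≫ f ≫ e₂.inv = 0 := h _
  calc f = e₁.hom ≫ (e₁.inv ≫ f ≫ e₂.inv) ≫ e₂.hom := by simp
  _ = 0 := by rw [h0]; simp

lemma zero_shift_iff (a : ℤ) (X Y : C) :
    (∀ f : X ⟶ Y, f = 0) ↔ (∀ f : X⟦a⟧ ⟶ Y⟦a⟧, f = 0) := by
  constructor
  · intro h f
    obtain ⟨g, rfl⟩ := (shiftFunctor C a).map_surjective f
    rw [h g, Functor.map_zero]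
  · intro h f
    apply (shiftFunctor C a).map_injective
    rw [h ((shiftFunctor C a).map f), Functor.map_zero]

lemma zero_shift_left_iff (k : ℤ) (X Y : C) :
    (∀ f : X⟦k⟧ ⟶ Y, f = 0) ↔ (∀ f : X ⟶ Y⟦-k⟧, f = 0) := by
  constructor
  · intro h
    exact zero_of_iso ((shiftFunctorCompIsoId C k (-k) (add_neg_cancel k)).symm.app X)
      (Iso.refl _) ((zero_shift_iff (-k) _ _).1 h)
  · intro h
    exact zero_of_iso (Iso.refl _)
      ((shiftFunctorCompIsoId C (-k) k (neg_add_cancel k)).app Y)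
      ((zero_shift_iff k _ _).1 h)

lemma compact_coprod_zero {W : C} (hW : IsCompactObj W) {J : Type v}
    (K : Discrete J ⥤ C) (c : Cocone K) (hc : IsColimit c)
    (h : ∀ j : J, ∀ g : W ⟶ K.obj ⟨j⟩, g = 0) (g : W ⟶ c.pt) : g = 0 := by
  obtain ⟨hpres⟩ := hW J
  let F := preadditiveCoyoneda.obj (Opposite.op W)
  have hmap : IsColimit (F.mapCocone c) := isColimitOfPreserves F hc
  have hid : 𝟙 (F.obj c.pt) = 0 := by
    apply hmap.hom_ext
    intro j
    ext x
    have hx : x = 0 := h j.as x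
    subst hx
    simp
  have key := congrArg (fun φ : F.obj c.pt ⟶ F.obj c.pt => AddCommGrpCat.Hom.hom φ g) hid
  exact key

lemma genAisle_orth (G : C) (hG : IsCompactObj G) (N : ℤ)
    (hN : ∀ n ≥ N, ∀ f : G⟦-n⟧ ⟶ G, f = 0) (k : ℤ) (hk : k ≤ -N) :
    ∀ Y ∈ genAisle G, ∀ f : G⟦k⟧ ⟶ Y, f = 0 := by
  intro Y hY
  refine hY {Z : C | ∀ f : G⟦k⟧ ⟶ Z, f = 0} ⟨?_, ?_, ?_⟩
  · rintro Z ⟨i, hi, ⟨e⟩⟩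
    have h0 := hN (-(k+i)) (by omega)
    have h1 : ∀ f : G⟦k⟧⟦i⟧ ⟶ G⟦-i⟧⟦i⟧, f = 0 :=
      zero_of_iso ((shiftFunctorAdd' C k i (-(-(k+i))) (by omega)).symm.app G)
        ((shiftFunctorCompIsoId C (-i) i (neg_add_cancel i)).symm.app G) h0
    exact zero_of_iso (Iso.refl _) e.symm ((zero_shift_iff i _ _).2 h1)
  · intro J f c hc hj
    obtain ⟨hcolim⟩ := hc
    refine (zero_shift_left_iff k _ _).2 ?_
    exact compact_coprod_zero hG (Discrete.functor f ⋙ shiftFunctor C (-k))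
      ((shiftFunctor C (-k)).mapCocone c) (isColimitOfPreserves _ hcolim)
      (fun j => (zero_shift_left_iff k _ _).1 (hj j))
  · rintro x ⟨a, b, f, g, h, hT, ha, hb⟩ φ
    obtain ⟨ψ, hψ⟩ := Triangle.coyoneda_exact₂ _ hT φ (hb (φ ≫ g))
    rw [hψ, ha ψ]; exact zero_comp

lemma tstructure_zero (t : TStructure C) {X Y : C} (f : X ⟶ Y) (n₀ n₁ : ℤ) (h : n₀ < n₁)
    (hX : t.le n₀ X) (hY : t.ge n₁ Y) : f = 0 := by
  have hX' : t.le (n₁ - 1) X := t.le_monotone (show n₀ ≤ n₁ - 1 by omega) X hX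
  have h1 : t.le 0 (X⟦n₁ - 1⟧) := t.le_shift (n₁ - 1) (n₁ - 1) 0 (by omega) X hX'
  have h2 : t.ge 1 (Y⟦n₁ - 1⟧) := t.ge_shift n₁ (n₁ - 1) 1 (by omega) Y hY
  have h3 : f⟦n₁ - 1⟧' = 0 := t.zero' _ h1 h2
  apply (shiftFunctor C (n₁ - 1)).map_injective
  rw [h3, Functor.map_zero]

/-- if `G` is a compact generator with `Hom(Σ^{-n}G, G) = 0` for `n ≫ 0`,
every t-structure in the preferred equivalence class is non-degenerate. -/
theorem preferred_nondegenerate [HasCoproducts.{v} C] (G : C)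
    (hG : IsCompactGenerator G) (hvan : homVanishEventually G G)
    (t : TStructure C) (ht : inPreferred G t) :
    (∀ X : C, (∀ n : ℤ, t.le n X) → IsZero X) ∧
    (∀ X : C, (∀ n : ℤ, t.ge n X) → IsZero X) := by
  obtain ⟨hGc, hGgen⟩ := hG
  obtain ⟨A, hA, h1, h2⟩ := ht
  obtain ⟨N₀, hN₀⟩ := hvan
  constructor
  · intro X hX
    refine hGgen X ?_
    intro j f
    have key : ∀ s : ℤ, ∀ g : G⟦-N₀⟧ ⟶ X⟦s⟧, g = 0 := by
      intro s
      have hle : t.le 0 (X⟦s - A⟧) := t.le_shift (s - A) (s - A) 0 (by omega) X (hX (s - A))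
      have hmem : (X⟦s - A⟧)⟦(A : ℤ)⟧ ∈ genAisle G := h2 _ hle
      have horth : ∀ g : G⟦-N₀⟧ ⟶ (X⟦s - A⟧)⟦(A : ℤ)⟧, g = 0 :=
        genAisle_orth G hGc N₀ hN₀ (-N₀) (le_refl _) _ hmem
      exact zero_of_iso (Iso.refl _) ((shiftFunctorAdd' C (s - A) A s (by omega)).symm.app X)
        horth
    have h3 := (zero_shift_iff (-(-N₀ - j)) _ _).1 (key (-N₀ - j))
    exact zero_of_iso ((shiftFunctorAdd' C (-N₀) (-(-N₀ - j)) j (by omega)).app G)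
      ((shiftFunctorCompIsoId C (-N₀ - j) (-(-N₀ - j)) (add_neg_cancel _)).app X) h3 f
  · intro X hX
    refine hGgen X ?_
    intro j f
    set p : ℤ := max j 0 with hp
    have hmem0 : (G⟦p + A⟧)⟦(-A : ℤ)⟧ ∈ shiftSetLE G 0 :=
      ⟨-p, by omega, ⟨(shiftFunctorAdd' C (p + A) (-A) (-(-p)) (by omega)).symm.app G⟩⟩
    have hmem : (G⟦p + A⟧)⟦(-A : ℤ)⟧ ∈ genAisle G := fun S hS => hS.1 hmem0
    have hle : t.le 0 (G⟦p + A⟧) := h1 _ hmem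
    have hle' : t.le (p + A - j) (G⟦j⟧) := by
      have h4 : t.le (p + A - j) ((G⟦p + A⟧)⟦j - p - A⟧) :=
        t.le_shift 0 (j - p - A) (p + A - j) (by omega) _ hle
      exact (t.le (p + A - j)).prop_of_iso
        ((shiftFunctorAdd' C (p + A) (j - p - A) j (by omega)).symm.app G) h4
    exact tstructure_zero t f (p + A - j) (p + A - j + 1) (by omega) hle' (hX _)


end GluePaper
end
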